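/- Let L = (ℓ_j)_{j≥1} be a fractal string and let d ∈ (0,1). Then the following four conditions are equivalent: (i) M*_d < ∞; (ii) there is a constant c > 0 with ℓ_j ≤ c · j^{−1/d} for all j ≥ 1; (iii) there is a constant C > 0 with N_L(x) ≤ C x^d for all x > 0; (iv) there is a constant C₁ > 0 with φ_ν(x) = W(x) − N_ν(x) ≤ C₁ x^d for all x > 0. -/

import Mathlib

open Filter Topology

/-- A fractal string: a nonincreasing, positive, summable sequence of lengths
`ℓ 0 ≥ ℓ 1 ≥ ⋯ > 0` (indexed from `0`, representing `ℓ_1, ℓ_2, …`). -/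
def IsFractalString (ℓ : ℕ → ℝ) : Prop :=
  (∀ j, 0 < ℓ j) ∧ Antitone ℓ ∧ Summable ℓ

/-- The volume `V(ε) = ∑ⱼ min(ℓⱼ, 2ε)` of the inner ε-neighborhood of the boundary. -/
noncomputable def stringVol (ℓ : ℕ → ℝ) (ε : ℝ) : ℝ :=
  ∑' j, min (ℓ j) (2 * ε)

/-- Upper `d`-dimensional Minkowski content `limsup_{ε→0⁺} V(ε)/ε^{1-d}`. -/
noncomputable def upperContent (ℓ : ℕ → ℝ) (d : ℝ) : ENNReal :=
  Filter.limsup (fun ε : ℝ => ENNReal.ofReal (stringVol ℓ ε / ε ^ (1 - d))) (𝓝[>] 0)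

/-- Lower `d`-dimensional Minkowski content `liminf_{ε→0⁺} V(ε)/ε^{1-d}`. -/
noncomputable def lowerContent (ℓ : ℕ → ℝ) (d : ℝ) : ENNReal :=
  Filter.liminf (fun ε : ℝ => ENNReal.ofReal (stringVol ℓ ε / ε ^ (1 - d))) (𝓝[>] 0)

/-- The Minkowski dimension `D = inf {d ≥ 0 : M*_d < ∞}`. -/
noncomputable def minkDim (ℓ : ℕ → ℝ) : ℝ :=
  sInf {d : ℝ | 0 ≤ d ∧ upperContent ℓ d < ⊤}

/-- The spectral (frequency) counting function `N_ν(x) = ∑ⱼ ⌊ℓⱼ x⌋`. -/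
noncomputable def spectralCount (ℓ : ℕ → ℝ) (x : ℝ) : ℝ :=
  ∑' j, (⌊ℓ j * x⌋₊ : ℝ)

/-- The Weyl term `W(x) = (∑ⱼ ℓⱼ) x`. -/
noncomputable def weylTerm (ℓ : ℕ → ℝ) (x : ℝ) : ℝ :=
  (∑' j, ℓ j) * x

/-- The geometric counting function `N_L(x) = #{j ≥ 1 : ℓⱼ⁻¹ ≤ x}`. -/
noncomputable def geomCount (ℓ : ℕ → ℝ) (x : ℝ) : ℝ :=
  (({j : ℕ | (ℓ j)⁻¹ ≤ x}).ncard : ℝ)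

/-- The "asymptotic second term" `φ_ν(x) = W(x) - N_ν(x)`. -/
noncomputable def phiNu (ℓ : ℕ → ℝ) (x : ℝ) : ℝ :=
  weylTerm ℓ x - spectralCount ℓ x

/-- `L` is Minkowski measurable (in dimension `D`) with Minkowski content `M`:
`V(ε)/ε^{1-D} → M` as `ε → 0⁺`. -/
def MinkMeasurableWith (ℓ : ℕ → ℝ) (D M : ℝ) : Prop :=
  Tendsto (fun ε : ℝ => stringVol ℓ ε / ε ^ (1 - D)) (𝓝[>] (0:ℝ)) (𝓝 M)

/-- `L` is Minkowski measurable in dimension `D` (with some positive finite content). -/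
def MinkMeasurable (ℓ : ℕ → ℝ) (D : ℝ) : Prop :=
  ∃ M : ℝ, 0 < M ∧ MinkMeasurableWith ℓ D M

/-- Hypothesis (6.1): `N_ν(x) = W(x) - C x^D + o(x^D)` as `x → +∞`. -/
def SpectralAsymp (ℓ : ℕ → ℝ) (D C : ℝ) : Prop :=
  Tendsto (fun x : ℝ => (spectralCount ℓ x - (weylTerm ℓ x - C * x ^ D)) / x ^ D)
    atTop (𝓝 0)

/-- The inverse spectral problem `(ISP)_D`: every fractal string of Minkowski
dimension `D` satisfying (6.1) is Minkowski measurable. -/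
def ISP (D : ℝ) : Prop :=
  ∀ ℓ : ℕ → ℝ, IsFractalString ℓ → minkDim ℓ = D →
    (∃ C : ℝ, C ≠ 0 ∧ SpectralAsymp ℓ D C) → MinkMeasurable ℓ D

namespace FSAux

lemma finite_ge {ℓ : ℕ → ℝ} (h : Summable ℓ) {t : ℝ} (ht : 0 < t) :
    {j : ℕ | t ≤ ℓ j}.Finite := by
  have h1 : ∀ᶠ j in atTop, ℓ j < t := h.tendsto_atTop_zero.eventually_lt_const ht
  rw [← Nat.cofinite_eq_atTop, Filter.eventually_cofinite] at h1
  exact h1.subset (fun j hj => by simp only [Set.mem_setOf_eq] at hj ⊢; linarith)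

lemma summable_min {ℓ : ℕ → ℝ} (h : IsFractalString ℓ) {t : ℝ} (ht : 0 ≤ t) :
    Summable (fun j => min (ℓ j) t) :=
  h.2.2.of_nonneg_of_le (fun j => le_min (h.1 j).le ht) (fun j => min_le_left _ _)

lemma summable_floor {ℓ : ℕ → ℝ} (h : IsFractalString ℓ) {x : ℝ} (hx : 0 ≤ x) :
    Summable (fun j => (⌊ℓ j * x⌋₊ : ℝ)) := by
  exact (h.2.2.mul_right x).of_nonneg_of_le (fun j => by positivity)
    (fun j => Nat.floor_le (mul_nonneg (h.1 j).le hx))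

lemma stringVol_nonneg {ℓ : ℕ → ℝ} (h : IsFractalString ℓ) {ε : ℝ} (hε : 0 ≤ ε) :
    0 ≤ stringVol ℓ ε :=
  tsum_nonneg (fun j => le_min (h.1 j).le (by positivity))

lemma stringVol_le {ℓ : ℕ → ℝ} (h : IsFractalString ℓ) {ε : ℝ} (hε : 0 ≤ ε) :
    stringVol ℓ ε ≤ ∑' j, ℓ j :=
  Summable.tsum_le_tsum (fun j => min_le_left _ _) (summable_min h (by positivity)) h.2.2

/-- key identity: φ_ν(x) = ∑ (ℓ j * x - ⌊ℓ j * x⌋₊) -/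
lemma phiNu_eq {ℓ : ℕ → ℝ} (h : IsFractalString ℓ) {x : ℝ} (hx : 0 ≤ x) :
    phiNu ℓ x = ∑' j, (ℓ j * x - (⌊ℓ j * x⌋₊ : ℝ)) := by
  rw [phiNu, weylTerm, spectralCount, ← tsum_mul_right,
    Summable.tsum_sub (h.2.2.mul_right x) (summable_floor h hx)]

lemma phiNu_le_vol {ℓ : ℕ → ℝ} (h : IsFractalString ℓ) {x : ℝ} (hx : 0 < x) :
    phiNu ℓ x ≤ x * stringVol ℓ (1 / (2 * x)) := by
  rw [phiNu_eq h hx.le, stringVol, ← tsum_mul_left]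
  apply Summable.tsum_le_tsum _ ((h.2.2.mul_right x).sub (summable_floor h hx.le))
    (((summable_min h (by positivity)).mul_left x))
  intro j
  have h1 : (2:ℝ) * (1 / (2 * x)) = 1/x := by field_simp
  rw [h1, mul_min_of_nonneg _ _ hx.le, mul_one_div, div_self hx.ne', mul_comm (ℓ j) x]
  rcases le_total (x * ℓ j) 1 with h'|h'
  · have : ⌊x * ℓ j⌋₊ = if x * ℓ j = 1 then 1 else 0 := by
      split_ifs with he
      · simp [he]
      · exact Nat.floor_eq_zero.2 (lt_of_le_of_ne h' he)
    rw [min_eq_left h', this]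
    split_ifs with he
    · simp [he]
    · simp
  · rw [min_eq_right h']
    have := Nat.sub_one_lt_floor (x * ℓ j)
    linarith

end FSAux

namespace FSAux

lemma content_lt_top_of_vol_bound {ℓ : ℕ → ℝ} {d K ε₀ : ℝ} (hε₀ : 0 < ε₀)
    (hb : ∀ ε : ℝ, 0 < ε → ε < ε₀ → stringVol ℓ ε ≤ K * ε ^ (1 - d)) :
    upperContent ℓ d < ⊤ := by
  have hle : upperContent ℓ d ≤ ENNReal.ofReal K := by
    apply Filter.limsup_le_of_le
    · isBoundedDefault
    · filter_upwards [Ioo_mem_nhdsGT_of_mem (Set.mem_Ico.2 ⟨le_refl (0:ℝ), hε₀⟩)] with ε hε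
      apply ENNReal.ofReal_le_ofReal
      rw [div_le_iff₀ (Real.rpow_pos_of_pos hε.1 _)]
      exact hb ε hε.1 hε.2
  exact hle.trans_lt ENNReal.ofReal_lt_top

lemma vol_bound_of_content_lt_top {ℓ : ℕ → ℝ} {d : ℝ} (h : IsFractalString ℓ)
    (hd1 : d < 1) (hfin : upperContent ℓ d < ⊤) :
    ∃ K : ℝ, 0 < K ∧ ∀ ε : ℝ, 0 < ε → stringVol ℓ ε ≤ K * ε ^ (1 - d) := by
  set A : ENNReal := upperContent ℓ d + 1 with hA
  have hAne : A ≠ ⊤ := by finiteness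
  have hlt : upperContent ℓ d < A := ENNReal.lt_add_right hfin.ne one_ne_zero
  have hev : ∀ᶠ ε in 𝓝[>] (0:ℝ),
      ENNReal.ofReal (stringVol ℓ ε / ε ^ (1 - d)) < A :=
    Filter.eventually_lt_of_limsup_lt hlt
  rw [Filter.eventually_iff, mem_nhdsGT_iff_exists_Ioo_subset] at hev
  obtain ⟨u, hu, hsub⟩ := hev
  rw [Set.mem_Ioi] at hu
  set S : ℝ := ∑' j, ℓ j
  have hS : 0 ≤ S := tsum_nonneg (fun j => (h.1 j).le)
  refine ⟨max A.toReal (S / (u/2) ^ (1 - d)) + 1, by positivity, fun ε hε => ?_⟩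
  have hεpow : (0:ℝ) < ε ^ (1 - d) := Real.rpow_pos_of_pos hε _
  rcases lt_or_ge ε u with hcase | hcase
  · have h1 : stringVol ℓ ε / ε ^ (1 - d) ≤ A.toReal := by
      have := hsub ⟨hε, hcase⟩
      rw [Set.mem_setOf_eq] at this
      exact (ENNReal.ofReal_le_iff_le_toReal hAne).1 this.le
    rw [div_le_iff₀ hεpow] at h1
    refine h1.trans ?_
    apply mul_le_mul_of_nonneg_right _ hεpow.le
    nlinarith [le_max_left A.toReal (S / (u/2) ^ (1 - d)), ENNReal.toReal_nonneg (a := A)]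
  · have h2 : (u/2) ^ (1-d) ≤ ε ^ (1-d) :=
      Real.rpow_le_rpow (by linarith) (by linarith) (by linarith)
    have h3 : (0:ℝ) < (u/2) ^ (1-d) := Real.rpow_pos_of_pos (by linarith) _
    have h4 : stringVol ℓ ε ≤ S := stringVol_le h hε.le
    have h5 : S ≤ (S / (u/2) ^ (1-d)) * ε ^ (1-d) := by
      rw [div_mul_eq_mul_div, le_div_iff₀ h3]
      exact mul_le_mul_of_nonneg_left h2 hS
    refine h4.trans (h5.trans ?_)
    apply mul_le_mul_of_nonneg_right _ hεpow.le
    nlinarith [le_max_right A.toReal (S / (u/2) ^ (1 - d))]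

end FSAux

namespace FSAux

lemma imp14 {ℓ : ℕ → ℝ} {d : ℝ} (h : IsFractalString ℓ) (hd1 : d < 1)
    (hfin : upperContent ℓ d < ⊤) :
    ∃ C₁ : ℝ, 0 < C₁ ∧ ∀ x : ℝ, 0 < x → phiNu ℓ x ≤ C₁ * x ^ d := by
  obtain ⟨K, hK, hb⟩ := vol_bound_of_content_lt_top h hd1 hfin
  refine ⟨K / 2 ^ (1 - d), by positivity, fun x hx => ?_⟩
  have h1 : phiNu ℓ x ≤ x * stringVol ℓ (1 / (2 * x)) := phiNu_le_vol h hx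
  have h2 : stringVol ℓ (1 / (2 * x)) ≤ K * (1 / (2 * x)) ^ (1 - d) :=
    hb _ (by positivity)
  have h3 : (1 / (2 * x)) ^ (1 - d) = ((2:ℝ) ^ (1-d) * x ^ (1-d))⁻¹ := by
    rw [one_div, ← Real.mul_rpow (by norm_num) hx.le, ← Real.inv_rpow (by positivity)]
  have h4 : x * (K * (1 / (2 * x)) ^ (1 - d)) = K / 2 ^ (1-d) * x ^ d := by
    rw [h3]
    have hx1 : x ^ d * x ^ (1-d) = x := by
      rw [← Real.rpow_add hx]; norm_num
    have h2p : (0:ℝ) < (2:ℝ)^(1-d) := Real.rpow_pos_of_pos (by norm_num) _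
    have hxp : (0:ℝ) < x^(1-d) := Real.rpow_pos_of_pos hx _
    field_simp
    linear_combination (-1:ℝ) * hx1
  calc phiNu ℓ x ≤ x * stringVol ℓ (1 / (2 * x)) := h1
    _ ≤ x * (K * (1 / (2 * x)) ^ (1 - d)) := by
        exact mul_le_mul_of_nonneg_left h2 hx.le
    _ = K / 2 ^ (1-d) * x ^ d := h4

end FSAux

namespace FSAux

lemma band_finite {ℓ : ℕ → ℝ} (h : IsFractalString ℓ) {y : ℝ} (hy : 0 < y) :
    {j : ℕ | 1/2 ≤ ℓ j * y ∧ ℓ j * y < 1}.Finite := by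
  apply (finite_ge h.2.2 (t := 1/(2*y)) (by positivity)).subset
  intro j hj
  simp only [Set.mem_setOf_eq] at hj ⊢
  rw [div_le_iff₀ (by positivity)]
  nlinarith [hj.1]

lemma band_card {ℓ : ℕ → ℝ} (h : IsFractalString ℓ) {y : ℝ} (hy : 0 < y) :
    (({j : ℕ | 1/2 ≤ ℓ j * y ∧ ℓ j * y < 1}).ncard : ℝ) ≤ 2 * phiNu ℓ y := by
  set B := {j : ℕ | 1/2 ≤ ℓ j * y ∧ ℓ j * y < 1} with hB
  have hBfin := band_finite h hy
  have hsum : Summable (fun j => ℓ j * y - (⌊ℓ j * y⌋₊ : ℝ)) :=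
    (h.2.2.mul_right y).sub (summable_floor h hy.le)
  have hnn : ∀ j, 0 ≤ ℓ j * y - (⌊ℓ j * y⌋₊ : ℝ) :=
    fun j => sub_nonneg.2 (Nat.floor_le (mul_nonneg (h.1 j).le hy.le))
  have h1 : ∑ j ∈ hBfin.toFinset, (ℓ j * y - (⌊ℓ j * y⌋₊ : ℝ)) ≤ phiNu ℓ y := by
    rw [phiNu_eq h hy.le]
    exact Summable.sum_le_tsum _ (fun j _ => hnn j) hsum
  have h2 : (hBfin.toFinset.card : ℝ) * (1/2) ≤
      ∑ j ∈ hBfin.toFinset, (ℓ j * y - (⌊ℓ j * y⌋₊ : ℝ)) := by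
    have := Finset.card_nsmul_le_sum hBfin.toFinset
      (fun j => ℓ j * y - (⌊ℓ j * y⌋₊ : ℝ)) (1/2) ?_
    · simpa [nsmul_eq_mul] using this
    · intro j hj
      rw [Set.Finite.mem_toFinset] at hj
      simp only [Set.mem_setOf_eq] at hj
      show 1/2 ≤ ℓ j * y - (⌊ℓ j * y⌋₊ : ℝ)
      rw [Nat.floor_eq_zero.2 hj.2]
      simpa using hj.1
  have h3 : B.ncard = hBfin.toFinset.card := Set.ncard_eq_toFinset_card _ hBfin
  rw [h3]
  linarith

end FSAux

namespace FSAux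

lemma imp43 {ℓ : ℕ → ℝ} {d : ℝ} (h : IsFractalString ℓ) (hd0 : 0 < d)
    {C₁ : ℝ} (hC₁ : 0 < C₁) (hφ : ∀ x : ℝ, 0 < x → phiNu ℓ x ≤ C₁ * x ^ d) :
    ∃ C : ℝ, 0 < C ∧ ∀ x : ℝ, 0 < x → geomCount ℓ x ≤ C * x ^ d := by
  have h2d : 1 < (2:ℝ) ^ d := Real.one_lt_rpow_iff_of_pos (by norm_num) |>.2 (Or.inl ⟨by norm_num, hd0⟩)
  set r : ℝ := ((2:ℝ) ^ d)⁻¹ with hr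
  have hr0 : 0 < r := by positivity
  have hr1 : r < 1 := inv_lt_one_of_one_lt₀ h2d
  refine ⟨2 * C₁ * (r / (1 - r)), mul_pos (by positivity) (div_pos hr0 (by linarith)), fun x hx => ?_⟩
  set S : Set ℕ := {j : ℕ | (ℓ j)⁻¹ ≤ x} with hS
  have hSmem : ∀ j, j ∈ S ↔ x⁻¹ ≤ ℓ j := by
    intro j
    rw [hS, Set.mem_setOf_eq, inv_le_comm₀ (h.1 j) hx]
  have hSfin : S.Finite := (finite_ge h.2.2 (inv_pos.2 hx)).subset
    (fun j hj => (hSmem j).1 hj)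
  obtain ⟨K, hK⟩ := pow_unbounded_of_one_lt (ℓ 0 * x) (by norm_num : (1:ℝ) < 2)
  set B : ℕ → Set ℕ := fun k => {j : ℕ | 1/2 ≤ ℓ j * (x / 2 ^ (k+1)) ∧ ℓ j * (x / 2 ^ (k+1)) < 1}
    with hBdef
  have hy : ∀ k : ℕ, (0:ℝ) < x / 2 ^ (k+1) := fun k => by positivity
  have hBfin : ∀ k, (B k).Finite := fun k => band_finite h (hy k)
  -- covering
  have hcover : ∀ j ∈ S, ∃ k < K, j ∈ B k := by
    intro j hj
    have ht1 : 1 ≤ ℓ j * x := by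
      rw [← inv_mul_cancel₀ hx.ne']
      exact mul_le_mul_of_nonneg_right ((hSmem j).1 hj) hx.le
    set t : ℝ := ℓ j * x with htdef
    have ht0 : 0 ≤ t := by positivity
    set n : ℕ := ⌊t⌋₊ with hn
    have hn1 : 1 ≤ n := Nat.le_floor (by exact_mod_cast ht1)
    set k : ℕ := Nat.log 2 n with hk
    have hk1 : (2:ℝ) ^ k ≤ t := by
      calc ((2:ℕ):ℝ) ^ k ≤ (n:ℝ) := by
            exact_mod_cast Nat.cast_le.2 (Nat.pow_log_le_self 2 (by omega))
        _ ≤ t := Nat.floor_le ht0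
    have hk2 : t < (2:ℝ) ^ (k+1) := by
      have h1 : t < n + 1 := Nat.lt_floor_add_one t
      have h2 : n + 1 ≤ 2 ^ (k+1) := Nat.lt_pow_succ_log_self (by norm_num) n
      calc t < ((n:ℝ) + 1) := h1
        _ ≤ ((2:ℕ):ℝ) ^ (k+1) := by exact_mod_cast Nat.cast_le.2 h2
        _ = (2:ℝ) ^ (k+1) := by norm_num
    refine ⟨k, ?_, ?_⟩
    · have hle : t ≤ ℓ 0 * x :=
        mul_le_mul_of_nonneg_right (h.2.1 (Nat.zero_le j)) hx.le
      have : (2:ℝ) ^ k < (2:ℝ) ^ K := lt_of_le_of_lt hk1 (hle.trans_lt hK)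
      exact (pow_lt_pow_iff_right₀ (by norm_num : (1:ℝ) < 2)).1 this
    · have hpow : (0:ℝ) < (2:ℝ) ^ (k+1) := by positivity
      have heq : ℓ j * (x / 2 ^ (k+1)) = t / 2 ^ (k+1) := by ring
      constructor
      · rw [heq, le_div_iff₀ hpow, pow_succ]
        linarith
      · rw [heq, div_lt_one hpow]
        exact hk2
  set F : ℕ → Finset ℕ := fun k => (hBfin k).toFinset with hF
  have hsub : hSfin.toFinset ⊆ (Finset.range K).biUnion F := by
    intro j hj
    rw [Set.Finite.mem_toFinset] at hj
    obtain ⟨k, hkK, hjB⟩ := hcover j hj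
    exact Finset.mem_biUnion.2 ⟨k, Finset.mem_range.2 hkK, (Set.Finite.mem_toFinset _).2 hjB⟩
  have hcard : S.ncard ≤ ∑ k ∈ Finset.range K, (B k).ncard := by
    rw [Set.ncard_eq_toFinset_card _ hSfin]
    calc hSfin.toFinset.card ≤ ((Finset.range K).biUnion F).card := Finset.card_le_card hsub
      _ ≤ ∑ k ∈ Finset.range K, (F k).card := Finset.card_biUnion_le
      _ = ∑ k ∈ Finset.range K, (B k).ncard := by
          refine Finset.sum_congr rfl (fun k _ => ?_)
          rw [Set.ncard_eq_toFinset_card _ (hBfin k)]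
  have hband : ∀ k : ℕ, ((B k).ncard : ℝ) ≤ 2 * C₁ * (x ^ d * r ^ (k+1)) := by
    intro k
    have h1 := band_card h (hy k)
    have h2 := hφ _ (hy k)
    have h3 : (x / 2 ^ (k+1)) ^ d = x ^ d * r ^ (k+1) := by
      rw [Real.div_rpow hx.le (by positivity), ← Real.rpow_natCast 2 (k+1),
        ← Real.rpow_mul (by norm_num), mul_comm ((k+1:ℕ):ℝ) d,
        Real.rpow_mul (by norm_num), Real.rpow_natCast, hr, div_eq_mul_inv, inv_pow]
    calc ((B k).ncard:ℝ) ≤ 2 * phiNu ℓ (x / 2^(k+1)) := h1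
      _ ≤ 2 * (C₁ * (x / 2^(k+1)) ^ d) := by linarith
      _ = 2 * C₁ * (x ^ d * r ^ (k+1)) := by rw [h3]; ring
  have hgeom : ∑ k ∈ Finset.range K, r ^ (k+1) ≤ r / (1-r) := by
    have hsum : ∑ k ∈ Finset.range K, r ^ k ≤ (1-r)⁻¹ := by
      have h1 : ∑ k ∈ Finset.range K, r ^ k ≤ ∑' k : ℕ, r ^ k :=
        Summable.sum_le_tsum _ (fun k _ => by positivity)
          (summable_geometric_of_lt_one hr0.le hr1)
      rwa [tsum_geometric_of_lt_one hr0.le hr1] at h1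
    calc ∑ k ∈ Finset.range K, r ^ (k+1) = r * ∑ k ∈ Finset.range K, r ^ k := by
          rw [Finset.mul_sum]
          exact Finset.sum_congr rfl (fun k _ => by ring)
      _ ≤ r * (1-r)⁻¹ := mul_le_mul_of_nonneg_left hsum hr0.le
      _ = r / (1-r) := by rw [div_eq_mul_inv]
  have hxd : (0:ℝ) < x ^ d := Real.rpow_pos_of_pos hx _
  calc geomCount ℓ x = ((S.ncard : ℕ) : ℝ) := rfl
    _ ≤ ∑ k ∈ Finset.range K, ((B k).ncard : ℝ) := by
        push_cast
        exact_mod_cast Nat.cast_le.2 hcard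
    _ ≤ ∑ k ∈ Finset.range K, 2 * C₁ * (x ^ d * r ^ (k+1)) :=
        Finset.sum_le_sum (fun k _ => hband k)
    _ = 2 * C₁ * x ^ d * ∑ k ∈ Finset.range K, r ^ (k+1) := by
        rw [Finset.mul_sum]
        exact Finset.sum_congr rfl (fun k _ => by ring)
    _ ≤ 2 * C₁ * x ^ d * (r / (1-r)) :=
        mul_le_mul_of_nonneg_left hgeom (by positivity)
    _ = 2 * C₁ * (r / (1-r)) * x ^ d := by ring

end FSAux

namespace FSAux

lemma imp32 {ℓ : ℕ → ℝ} {d : ℝ} (h : IsFractalString ℓ) (hd0 : 0 < d)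
    {C : ℝ} (hC : 0 < C) (hN : ∀ x : ℝ, 0 < x → geomCount ℓ x ≤ C * x ^ d) :
    ∃ c : ℝ, 0 < c ∧ ∀ j : ℕ, ℓ j ≤ c * ((j : ℝ) + 1) ^ (-(1 / d)) := by
  refine ⟨C ^ (1/d), Real.rpow_pos_of_pos hC _, fun j => ?_⟩
  set x : ℝ := (ℓ j)⁻¹ with hxdef
  have hx : 0 < x := inv_pos.2 (h.1 j)
  have hsub : ↑(Finset.range (j+1)) ⊆ {i : ℕ | (ℓ i)⁻¹ ≤ x} := by
    intro i hi
    simp only [Finset.coe_range, Set.mem_Iio] at hi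
    rw [Set.mem_setOf_eq, hxdef]
    exact inv_anti₀ (h.1 j) (h.2.1 (by omega))
  have hSfin : {i : ℕ | (ℓ i)⁻¹ ≤ x}.Finite := by
    apply (finite_ge h.2.2 (t := x⁻¹) (inv_pos.2 hx)).subset
    intro i hi
    rw [Set.mem_setOf_eq] at hi ⊢
    rwa [inv_le_comm₀ (h.1 i) hx] at hi
  have hcard : (j + 1 : ℝ) ≤ geomCount ℓ x := by
    have h1 : (j+1 : ℕ) ≤ {i : ℕ | (ℓ i)⁻¹ ≤ x}.ncard := by
      have := Set.ncard_le_ncard hsub hSfin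
      rwa [Set.ncard_coe_finset, Finset.card_range] at this
    rw [geomCount]
    exact_mod_cast h1
  have h2 : (j + 1 : ℝ) ≤ C * ((ℓ j) ^ d)⁻¹ := by
    have := (hcard.trans (hN x hx))
    rwa [hxdef, Real.inv_rpow (h.1 j).le] at this
  have h3 : (ℓ j) ^ d ≤ C / (j + 1 : ℝ) := by
    have hp : (0:ℝ) < (ℓ j) ^ d := Real.rpow_pos_of_pos (h.1 j) _
    rw [le_div_iff₀ (by positivity)]
    have hinv : (ℓ j ^ d)⁻¹ * ℓ j ^ d = 1 := inv_mul_cancel₀ hp.ne'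
    nlinarith [mul_le_mul_of_nonneg_right h2 hp.le, hinv]
  have h4 : ((ℓ j) ^ d) ^ (1/d) ≤ (C / (j+1:ℝ)) ^ (1/d) :=
    Real.rpow_le_rpow (Real.rpow_pos_of_pos (h.1 j) _).le h3 (by positivity)
  have h5 : ((ℓ j) ^ d) ^ (1/d) = ℓ j := by
    rw [← Real.rpow_mul (h.1 j).le, mul_one_div, div_self hd0.ne', Real.rpow_one]
  have h6 : (C / (j+1:ℝ)) ^ (1/d) = C ^ (1/d) * ((j:ℝ)+1) ^ (-(1/d)) := by
    rw [Real.div_rpow hC.le (by positivity), Real.rpow_neg (by positivity), div_eq_mul_inv]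
  rw [h5, h6] at h4
  exact h4

end FSAux

namespace FSAux

lemma telescope_rpow {q : ℝ} (hq : 0 < q) (n : ℕ) (hn : 1 ≤ n) :
    ((n:ℝ) + 1) ^ (-(q+1)) ≤ (1/q) * ((n:ℝ) ^ (-q) - ((n:ℝ) + 1) ^ (-q)) := by
  have hn0 : (0:ℝ) < n := by exact_mod_cast hn
  have hmvt := exists_hasDerivAt_eq_slope (fun y : ℝ => y ^ (-q))
    (fun y => (-q) * y ^ (-q - 1)) (by linarith : (n:ℝ) < (n:ℝ) + 1) ?_ ?_
  · obtain ⟨ξ, hξ, hderiv⟩ := hmvt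
    have hξ0 : (0:ℝ) < ξ := lt_trans hn0 hξ.1
    have h1 : (n:ℝ)^(-q) - ((n:ℝ)+1)^(-q) = q * ξ ^ (-(q+1)) := by
      have : ((n:ℝ) + 1) - (n:ℝ) = 1 := by ring
      rw [this, div_one] at hderiv
      have : -q - 1 = -(q+1) := by ring
      rw [this] at hderiv
      linear_combination hderiv
    have h2 : ((n:ℝ)+1) ^ (-(q+1)) ≤ ξ ^ (-(q+1)) :=
      Real.rpow_le_rpow_of_nonpos hξ0 hξ.2.le (by linarith)
    rw [h1]
    calc ((n:ℝ)+1) ^ (-(q+1)) = (1/q) * (q * ((n:ℝ)+1)^(-(q+1))) := by field_simp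
      _ ≤ (1/q) * (q * ξ ^ (-(q+1))) := by
          apply mul_le_mul_of_nonneg_left _ (by positivity)
          exact mul_le_mul_of_nonneg_left h2 hq.le
  · apply ContinuousOn.rpow_const continuousOn_id
    intro y hy
    rw [Set.mem_Icc] at hy
    exact Or.inl (ne_of_gt (show (0:ℝ) < id y by simp only [id_eq]; nlinarith [hy.1]))
  · intro y hy
    rw [Set.mem_Ioo] at hy
    exact Real.hasDerivAt_rpow_const (Or.inl (ne_of_gt (by nlinarith [hy.1])))

lemma telescope_hasSum {q : ℝ} (hq : 0 < q) (J : ℕ) (hJ : 1 ≤ J) :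
    HasSum (fun j : ℕ => ((J + j : ℕ):ℝ) ^ (-q) - ((J + j + 1 : ℕ):ℝ) ^ (-q))
      ((J:ℝ) ^ (-q)) := by
  have hmono : ∀ j : ℕ, ((J + j + 1 : ℕ):ℝ) ^ (-q) ≤ ((J + j : ℕ):ℝ) ^ (-q) := by
    intro j
    apply Real.rpow_le_rpow_of_nonpos (by positivity) (by push_cast; linarith) (by linarith)
  rw [hasSum_iff_tendsto_nat_of_nonneg (fun j => sub_nonneg.2 (hmono j))]
  have htel : ∀ N : ℕ, ∑ j ∈ Finset.range N,
      (((J + j : ℕ):ℝ) ^ (-q) - ((J + j + 1 : ℕ):ℝ) ^ (-q))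
      = ((J:ℝ)) ^ (-q) - ((J + N : ℕ):ℝ) ^ (-q) := by
    intro N
    exact Finset.sum_range_sub' (fun j => ((J + j : ℕ):ℝ) ^ (-q)) N
  simp_rw [htel]
  have hlim : Tendsto (fun N : ℕ => ((J + N : ℕ):ℝ) ^ (-q)) atTop (𝓝 0) := by
    apply (tendsto_rpow_neg_atTop hq).comp
    apply tendsto_natCast_atTop_atTop.comp
    exact tendsto_atTop_mono (fun N => Nat.le_add_left N J) tendsto_id
  simpa using (tendsto_const_nhds (x := ((J:ℝ))^(-q))).sub hlim

end FSAux

namespace FSAux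

lemma tail_sum {q c : ℝ} (hq : 0 < q) (hc : 0 < c) {ℓ : ℕ → ℝ} (h : IsFractalString ℓ)
    (hℓ : ∀ j : ℕ, ℓ j ≤ c * ((j:ℝ) + 1) ^ (-(q+1))) (J : ℕ) (hJ : 1 ≤ J) :
    ∑' j : ℕ, ℓ (j + J) ≤ (c/q) * (J:ℝ) ^ (-q) := by
  have key : ∀ j : ℕ, ℓ (j + J) ≤
      (c/q) * (((J + j : ℕ):ℝ) ^ (-q) - ((J + j + 1 : ℕ):ℝ) ^ (-q)) := by
    intro j
    have h2 := telescope_rpow hq (J + j) (le_trans hJ (Nat.le_add_right J j))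
    have h1 := hℓ (j + J)
    have e : ((j + J : ℕ):ℝ) + 1 = ((J + j : ℕ):ℝ) + 1 := by push_cast; ring
    rw [e] at h1
    have e2 : ((J + j + 1 : ℕ):ℝ) = ((J + j : ℕ):ℝ) + 1 := by push_cast; ring
    rw [e2]
    calc ℓ (j + J) ≤ c * (((J + j : ℕ):ℝ) + 1) ^ (-(q+1)) := h1
      _ ≤ c * ((1/q) * (((J + j:ℕ):ℝ) ^ (-q) - (((J + j:ℕ):ℝ) + 1) ^ (-q))) :=
          mul_le_mul_of_nonneg_left h2 hc.le
      _ = (c/q) * (((J + j:ℕ):ℝ) ^ (-q) - (((J + j:ℕ):ℝ) + 1) ^ (-q)) := by ring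
  calc ∑' j : ℕ, ℓ (j + J)
      ≤ ∑' j : ℕ, (c/q) * (((J + j : ℕ):ℝ) ^ (-q) - ((J + j + 1 : ℕ):ℝ) ^ (-q)) :=
        Summable.tsum_le_tsum key ((summable_nat_add_iff J).2 h.2.2)
          ((telescope_hasSum hq J hJ).mul_left (c/q)).summable
    _ = (c/q) * (J:ℝ) ^ (-q) := ((telescope_hasSum hq J hJ).mul_left (c/q)).tsum_eq

lemma imp21 {ℓ : ℕ → ℝ} {d : ℝ} (h : IsFractalString ℓ) (hd0 : 0 < d) (hd1 : d < 1)
    {c : ℝ} (hc : 0 < c) (hℓ : ∀ j : ℕ, ℓ j ≤ c * ((j:ℝ) + 1) ^ (-(1/d))) :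
    upperContent ℓ d < ⊤ := by
  set q : ℝ := 1/d - 1 with hqdef
  have hq : 0 < q := by
    rw [hqdef, sub_pos, lt_div_iff₀ hd0]
    linarith
  have hq1 : q + 1 = 1/d := by rw [hqdef]; ring
  have hℓ' : ∀ j : ℕ, ℓ j ≤ c * ((j:ℝ) + 1) ^ (-(q+1)) := by
    intro j; rw [hq1]; exact hℓ j
  set K : ℝ := 4 * c ^ d / 2 ^ d + (c/q) * (c ^ (d-1) / 2 ^ (d-1)) with hKdef
  apply content_lt_top_of_vol_bound (K := K) (ε₀ := c/2) (by positivity)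
  intro ε hε hεc
  set A : ℝ := (c / (2*ε)) ^ d with hAdef
  have hc2ε : 1 < c / (2*ε) := by rw [lt_div_iff₀ (by positivity)]; linarith
  have hA1 : 1 ≤ A := by
    rw [hAdef, ← Real.one_rpow d]
    exact Real.rpow_le_rpow (by norm_num) hc2ε.le hd0.le
  have hA0 : 0 < A := by linarith
  set J : ℕ := ⌈A⌉₊ with hJdef
  have hJ1 : 1 ≤ J := Nat.one_le_ceil_iff.2 hA0
  have hJA : A ≤ (J:ℝ) := Nat.le_ceil A
  have hJ2A : (J:ℝ) ≤ 2 * A := by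
    have h' : (J:ℝ) < A + 1 := Nat.ceil_lt_add_one hA0.le
    linarith
  -- split the volume
  have hsummin : Summable (fun j => min (ℓ j) (2*ε)) := summable_min h (by positivity)
  have hsplit : stringVol ℓ ε = ∑ j ∈ Finset.range J, min (ℓ j) (2*ε)
      + ∑' j : ℕ, min (ℓ (j + J)) (2*ε) := by
    rw [stringVol, ← Summable.sum_add_tsum_nat_add J hsummin]
  have hhead : ∑ j ∈ Finset.range J, min (ℓ j) (2*ε) ≤ 4 * ε * A := by
    calc ∑ j ∈ Finset.range J, min (ℓ j) (2*ε) ≤ ∑ j ∈ Finset.range J, 2*ε :=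
          Finset.sum_le_sum (fun j _ => min_le_right _ _)
      _ = (J:ℝ) * (2*ε) := by rw [Finset.sum_const, Finset.card_range, nsmul_eq_mul]
      _ ≤ (2*A) * (2*ε) := by
          apply mul_le_mul_of_nonneg_right hJ2A (by positivity)
      _ = 4 * ε * A := by ring
  have htail : ∑' j : ℕ, min (ℓ (j + J)) (2*ε) ≤ (c/q) * A ^ (-q) := by
    have h1 : ∑' j : ℕ, min (ℓ (j + J)) (2*ε) ≤ ∑' j : ℕ, ℓ (j + J) :=
      Summable.tsum_le_tsum (fun j => min_le_left _ _)
        ((summable_nat_add_iff J).2 hsummin) ((summable_nat_add_iff J).2 h.2.2)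
    have h2 := tail_sum hq hc h hℓ' J hJ1
    have h3 : (J:ℝ) ^ (-q) ≤ A ^ (-q) :=
      Real.rpow_le_rpow_of_nonpos hA0 hJA (by linarith)
    calc ∑' j : ℕ, min (ℓ (j + J)) (2*ε) ≤ (c/q) * (J:ℝ)^(-q) := h1.trans h2
      _ ≤ (c/q) * A^(-q) := mul_le_mul_of_nonneg_left h3 (by positivity)
  -- rpow algebra
  have hεd : ε ^ (1-d) * ε ^ d = ε := by
    rw [← Real.rpow_add hε]; norm_num
  have hA_eq : A = c ^ d / (2 ^ d * ε ^ d) := by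
    rw [hAdef, Real.div_rpow hc.le (by positivity), Real.mul_rpow (by norm_num) hε.le]
  have hAq : A ^ (-q) = c ^ (d-1) / (2 ^ (d-1) * ε ^ (d-1)) := by
    have e : d * (-q) = d - 1 := by
      rw [hqdef]; field_simp; ring
    rw [hAdef, ← Real.rpow_mul (by positivity : (0:ℝ) ≤ c/(2*ε)), e,
      Real.div_rpow hc.le (by positivity), Real.mul_rpow (by norm_num) hε.le]
  have hεd2 : ε ^ (d-1) = ε ^ d / ε := by
    rw [Real.rpow_sub hε, Real.rpow_one]
  have hεdpos : (0:ℝ) < ε ^ d := Real.rpow_pos_of_pos hε _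
  have h2dpos : (0:ℝ) < (2:ℝ) ^ d := Real.rpow_pos_of_pos (by norm_num) _
  have h2d1pos : (0:ℝ) < (2:ℝ) ^ (d-1) := Real.rpow_pos_of_pos (by norm_num) _
  have hgoal_eq : 4*ε*A + (c/q) * A^(-q) = K * ε^(1-d) := by
    rw [hAq, hA_eq, hKdef, hεd2]
    field_simp
    linear_combination (-1:ℝ) * hεd
  rw [hsplit, ← hgoal_eq]
  linarith

end FSAux

/-- For a fractal string and `d ∈ (0,1)`, the following are
equivalent: (i) `M*_d < ∞`; (ii) `ℓ_j ≤ c j^{-1/d}` for all `j`;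
(iii) `N_L(x) ≤ C x^d` for all `x > 0`; (iv) `φ_ν(x) = W(x) - N_ν(x) ≤ C₁ x^d`
for all `x > 0`. -/
theorem upperContent_tfae (ℓ : ℕ → ℝ) (h : IsFractalString ℓ) (d : ℝ)
    (hd : d ∈ Set.Ioo (0:ℝ) 1) :
    [ upperContent ℓ d < ⊤,
      ∃ c : ℝ, 0 < c ∧ ∀ j : ℕ, ℓ j ≤ c * ((j : ℝ) + 1) ^ (-(1 / d)),
      ∃ C : ℝ, 0 < C ∧ ∀ x : ℝ, 0 < x → geomCount ℓ x ≤ C * x ^ d,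
      ∃ C₁ : ℝ, 0 < C₁ ∧ ∀ x : ℝ, 0 < x → phiNu ℓ x ≤ C₁ * x ^ d ].TFAE := by
  obtain ⟨hd0, hd1⟩ := hd
  tfae_have 1 → 4 := fun h1 => FSAux.imp14 h hd1 h1
  tfae_have 4 → 3 := fun ⟨C₁, hC₁, hφ⟩ => FSAux.imp43 h hd0 hC₁ hφ
  tfae_have 3 → 2 := fun ⟨C, hC, hN⟩ => FSAux.imp32 h hd0 hC hN
  tfae_have 2 → 1 := fun ⟨c, hc, hℓ⟩ => FSAux.imp21 h hd0 hd1 hc hℓ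
  tfae_finish
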